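/- Let V be a discrete valuation ring with fraction field K and uniformizer ϖ, and let 1 ≤ r ≤ d + 1. Then there is a K-algebra isomorphism from O(V, ϖ) ⊗_V K onto the Laurent polynomial ring K[X₂^{±1}, …, X_{d+1}^{±1}] determined by T₁ ↦ ϖ·(X₂⋯X_r)^{-1} and T_i ↦ X_i for 2 ≤ i ≤ d + 1. -/

import Mathlib

open scoped BigOperators TensorProduct

/-- The multiplicative set of the variables `T_{r+1}, …, T_{d+1}` (indices `i` of
`Fin (d+1)` with `r ≤ i`, the variable `T_{i+1}` corresponding to the index `i`)
in the polynomial ring `V[T₁, …, T_{d+1}]`. -/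
noncomputable def oringSubmonoid (V : Type*) [CommRing V] (d r : ℕ) :
    Submonoid (MvPolynomial (Fin (d + 1)) V) :=
  Submonoid.closure ((fun i => MvPolynomial.X i) '' {i : Fin (d + 1) | r ≤ (i : ℕ)})

/-- The ideal generated by the relation `T₁ ⋯ T_r − c` in
`V[T₁, …, T_{d+1}][(T_{r+1} ⋯ T_{d+1})⁻¹]`. -/
noncomputable def oringRelation (V : Type*) [CommRing V] (c : V) (d r : ℕ) :
    Ideal (Localization (oringSubmonoid V d r)) :=
  Ideal.span {algebraMap (MvPolynomial (Fin (d + 1)) V) (Localization (oringSubmonoid V d r))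
      ((∏ i ∈ Finset.univ.filter fun i : Fin (d + 1) => (i : ℕ) < r, MvPolynomial.X i)
        - MvPolynomial.C c)}

/-- For a commutative ring `V`, an element `c ∈ V` and integers `1 ≤ r ≤ d + 1`,
`Oring V c d r` is the ring
`V[T₁, …, T_{d+1}][(T_{r+1} ⋯ T_{d+1})⁻¹] / (T₁ ⋯ T_r − c)`:
the polynomial ring over `V` in `d + 1` variables, with the variables
`T_{r+1}, …, T_{d+1}` inverted, modulo the relation `T₁ ⋯ T_r = c`. -/
def Oring (V : Type*) [CommRing V] (c : V) (d r : ℕ) : Type _ :=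
  Localization (oringSubmonoid V d r) ⧸ oringRelation V c d r

noncomputable instance (V : Type*) [CommRing V] (c : V) (d r : ℕ) :
    CommRing (Oring V c d r) :=
  Ideal.Quotient.commRing _

noncomputable instance (V : Type*) [CommRing V] (c : V) (d r : ℕ) :
    Algebra V (Oring V c d r) :=
  inferInstanceAs (Algebra V (Localization (oringSubmonoid V d r) ⧸ oringRelation V c d r))

/-- The canonical map `V → Oring V c d r`. -/
noncomputable def oringC (V : Type*) [CommRing V] (c : V) (d r : ℕ) : V →+* Oring V c d r :=
  algebraMap V (Oring V c d r)

/-- The class of the variable `T_{i+1}` in `Oring V c d r`. -/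
noncomputable def oringX (V : Type*) [CommRing V] (c : V) (d r : ℕ) (i : Fin (d + 1)) :
    Oring V c d r :=
  Ideal.Quotient.mk (oringRelation V c d r)
    (algebraMap (MvPolynomial (Fin (d + 1)) V) (Localization (oringSubmonoid V d r))
      (MvPolynomial.X i))


/-- The Laurent polynomial ring `K[X₂^{±1}, …, X_{d+1}^{±1}]` in `d` variables (the
variable `X_{j+2}` corresponding to the index `j` of `Fin d`): the localization of the
polynomial ring `K[X₂, …, X_{d+1}]` at the multiplicative set generated by the
variables. -/
abbrev LaurentRing (K : Type*) [CommRing K] (d : ℕ) : Type _ :=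
  Localization (Submonoid.closure
    (Set.range (MvPolynomial.X : Fin d → MvPolynomial (Fin d) K)))

/-- The variable `X_{j+2}` of the Laurent polynomial ring. -/
noncomputable def laurentX (K : Type*) [CommRing K] (d : ℕ) (j : Fin d) :
    LaurentRing K d :=
  algebraMap (MvPolynomial (Fin d) K) (LaurentRing K d) (MvPolynomial.X j)

section StatementAux

open MvPolynomial

/-- Splitting a product over indices `< r` off the first factor. -/
theorem prodFilterSucc {M : Type*} [CommMonoid M] {d r : ℕ} (hr : 1 ≤ r)
    (g : Fin (d + 1) → M) :
    ∏ i ∈ Finset.univ.filter (fun i : Fin (d + 1) => (i : ℕ) < r), g i =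
      g 0 * ∏ j ∈ Finset.univ.filter (fun j : Fin d => (j : ℕ) + 2 ≤ r), g j.succ := by
  rw [Finset.prod_filter, Fin.prod_univ_succ, Finset.prod_filter]
  rw [if_pos (by simp only [Fin.val_zero]; omega)]
  congr 1

variable (V : Type*) [CommRing V] [IsDomain V] (ϖ : V) (d r : ℕ)

local notation "K" => FractionRing V
local notation "L" => LaurentRing (FractionRing V) d
local notation "A" => Oring V ϖ d r
local notation "P" => MvPolynomial (Fin (d + 1)) V
local notation "Q" => MvPolynomial (Fin d) (FractionRing V)
local notation "S" => oringSubmonoid V d r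
local notation "LocP" => Localization (oringSubmonoid V d r)

/-- The variables of the Laurent ring as units. -/
noncomputable def laurentXU (j : Fin d) : Lˣ :=
  (IsLocalization.map_units (M := Submonoid.closure
    (Set.range (MvPolynomial.X : Fin d → MvPolynomial (Fin d) (FractionRing V)))) L
    ⟨MvPolynomial.X j, Submonoid.subset_closure (Set.mem_range_self j)⟩).unit

theorem laurentXU_val (j : Fin d) : (laurentXU V d j : L) = laurentX K d j := rfl

/-- The images of the variables under the forward map. -/
noncomputable def fwdVar : Fin (d + 1) → L :=
  Fin.cases
    (algebraMap K L (algebraMap V K ϖ) *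
      ((∏ j ∈ Finset.univ.filter fun j : Fin d => (j : ℕ) + 2 ≤ r, laurentXU V d j)⁻¹ : Lˣ))
    fun j => laurentX K d j

theorem fwdVar_succ (j : Fin d) : fwdVar V ϖ d r j.succ = laurentX K d j := by
  simp [fwdVar]

/-- The forward map on the polynomial ring. -/
noncomputable def fwdPoly : P →+* L :=
  MvPolynomial.eval₂Hom ((algebraMap K L).comp (algebraMap V K)) (fwdVar V ϖ d r)

theorem fwdPoly_units (hr : 1 ≤ r) (s : S) : IsUnit (fwdPoly V ϖ d r s) := by
  obtain ⟨s, hs⟩ := s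
  induction hs using Submonoid.closure_induction with
  | mem x hx =>
    obtain ⟨i, hi, rfl⟩ := hx
    induction i using Fin.cases with
    | zero => simp only [Set.mem_setOf_eq, Fin.val_zero] at hi; omega
    | succ j =>
      rw [fwdPoly, MvPolynomial.eval₂Hom_X', fwdVar_succ, ← laurentXU_val]
      exact Units.isUnit _
  | one => simp
  | mul x y hx hy ihx ihy => rw [map_mul]; exact ihx.mul ihy

/-- The forward map on the localization. -/
noncomputable def fwdLoc (hr : 1 ≤ r) : LocP →+* L :=
  IsLocalization.lift (M := S) (fwdPoly_units V ϖ d r hr)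

theorem fwdLoc_algebraMap (hr : 1 ≤ r) (p : P) :
    fwdLoc V ϖ d r hr (algebraMap P LocP p) = fwdPoly V ϖ d r p :=
  IsLocalization.lift_eq _ _

theorem fwdVar_mul_prod (hr : 1 ≤ r) :
    fwdVar V ϖ d r 0 *
      ∏ j ∈ Finset.univ.filter (fun j : Fin d => (j : ℕ) + 2 ≤ r), laurentX K d j =
    algebraMap K L (algebraMap V K ϖ) := by
  have : ∏ j ∈ Finset.univ.filter (fun j : Fin d => (j : ℕ) + 2 ≤ r), laurentX K d j =
      ((∏ j ∈ Finset.univ.filter fun j : Fin d => (j : ℕ) + 2 ≤ r, laurentXU V d j : Lˣ) : L) := by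
    simp only [← laurentXU_val]
    exact (Units.coe_prod _ _).symm
  rw [this, fwdVar]
  rw [Fin.cases_zero, mul_assoc, Units.inv_mul, mul_one]

theorem fwdLoc_rel (hr : 1 ≤ r) :
    fwdLoc V ϖ d r hr (algebraMap P LocP
      ((∏ i ∈ Finset.univ.filter fun i : Fin (d + 1) => (i : ℕ) < r, MvPolynomial.X i)
        - MvPolynomial.C ϖ)) = 0 := by
  rw [fwdLoc_algebraMap, map_sub, map_prod]
  have hX : ∀ i : Fin (d + 1), fwdPoly V ϖ d r (MvPolynomial.X i) = fwdVar V ϖ d r i := fun i =>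
    MvPolynomial.eval₂Hom_X' _ _ _
  rw [Finset.prod_congr rfl fun i _ => hX i, prodFilterSucc hr]
  have : ∀ j : Fin d, fwdVar V ϖ d r j.succ = laurentX K d j := fwdVar_succ V ϖ d r
  rw [Finset.prod_congr rfl fun j _ => this j, fwdVar_mul_prod V ϖ d r hr]
  rw [sub_eq_zero, fwdPoly, MvPolynomial.eval₂Hom_C, RingHom.comp_apply]

/-- The forward map on `Oring`. -/
noncomputable def fwd (hr : 1 ≤ r) : A →+* L :=
  Ideal.Quotient.lift (oringRelation V ϖ d r) (fwdLoc V ϖ d r hr) (by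
    intro a ha
    rw [oringRelation, Ideal.mem_span_singleton] at ha
    obtain ⟨c, rfl⟩ := ha
    rw [map_mul, fwdLoc_rel V ϖ d r hr, zero_mul])

theorem fwd_mk (hr : 1 ≤ r) (x : LocP) :
    fwd V ϖ d r hr (Ideal.Quotient.mk (oringRelation V ϖ d r) x) = fwdLoc V ϖ d r hr x := rfl

theorem fwd_oringX (hr : 1 ≤ r) (i : Fin (d + 1)) :
    fwd V ϖ d r hr (oringX V ϖ d r i) = fwdVar V ϖ d r i := by
  rw [oringX, fwd_mk, fwdLoc_algebraMap]
  exact MvPolynomial.eval₂Hom_X' _ _ _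

theorem fwd_algebraMap (hr : 1 ≤ r) (v : V) :
    fwd V ϖ d r hr (algebraMap V A v) = algebraMap K L (algebraMap V K v) := by
  have h1 : algebraMap V A v =
      Ideal.Quotient.mk (oringRelation V ϖ d r) (algebraMap V LocP v) := rfl
  rw [h1, IsScalarTower.algebraMap_apply V P LocP, fwd_mk, fwdLoc_algebraMap]
  rw [show algebraMap V P v = MvPolynomial.C v from rfl, fwdPoly, MvPolynomial.eval₂Hom_C,
    RingHom.comp_apply]

local notation "TA" => (FractionRing V) ⊗[V] (Oring V ϖ d r)

theorem oringX_mk_C (v : V) :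
    Ideal.Quotient.mk (oringRelation V ϖ d r) (algebraMap P LocP (MvPolynomial.C v)) =
      algebraMap V A v := by
  rw [show (MvPolynomial.C v : P) = algebraMap V P v from rfl,
    ← IsScalarTower.algebraMap_apply V P LocP]
  rfl

theorem oringX_prod :
    ∏ i ∈ Finset.univ.filter (fun i : Fin (d + 1) => (i : ℕ) < r), oringX V ϖ d r i =
      algebraMap V A ϖ := by
  set cmp : P →+* Oring V ϖ d r :=
    (Ideal.Quotient.mk (oringRelation V ϖ d r)).comp (algebraMap P LocP) with hcmp
  have hmem : cmp
      ((∏ i ∈ Finset.univ.filter fun i : Fin (d + 1) => (i : ℕ) < r, MvPolynomial.X i)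
        - MvPolynomial.C ϖ) = 0 :=
    Ideal.Quotient.eq_zero_iff_mem.mpr (Ideal.subset_span (Set.mem_singleton _))
  rw [map_sub, sub_eq_zero] at hmem
  calc ∏ i ∈ Finset.univ.filter (fun i : Fin (d + 1) => (i : ℕ) < r), oringX V ϖ d r i
      = cmp (∏ i ∈ Finset.univ.filter fun i : Fin (d + 1) => (i : ℕ) < r, MvPolynomial.X i) :=
        (map_prod cmp _ _).symm
    _ = cmp (MvPolynomial.C ϖ) := hmem
    _ = algebraMap V A ϖ := oringX_mk_C V ϖ d r ϖ

theorem one_tmul_oringX_isUnit (hϖ0 : ϖ ≠ 0) (i : Fin (d + 1)) :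
    IsUnit ((1 : K) ⊗ₜ[V] oringX V ϖ d r i) := by
  rcases lt_or_ge (i : ℕ) r with hi | hi
  · have hϖu : IsUnit (algebraMap V K ϖ) :=
      isUnit_iff_ne_zero.mpr ((map_ne_zero_iff _ (IsFractionRing.injective V K)).mpr hϖ0)
    have hu : IsUnit ((1 : K) ⊗ₜ[V] (algebraMap V (Oring V ϖ d r) ϖ)) := by
      rw [← Algebra.TensorProduct.algebraMap_apply' ϖ, Algebra.TensorProduct.algebraMap_apply]
      exact hϖu.map Algebra.TensorProduct.includeLeftRingHom
    rw [← oringX_prod V ϖ d r] at hu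
    have hmap := map_prod
      (Algebra.TensorProduct.includeRight :
        Oring V ϖ d r →ₐ[V] (FractionRing V) ⊗[V] (Oring V ϖ d r))
      (fun i => oringX V ϖ d r i)
      (Finset.univ.filter (fun i : Fin (d + 1) => (i : ℕ) < r))
    simp only [Algebra.TensorProduct.includeRight_apply] at hmap
    rw [hmap] at hu
    exact isUnit_of_dvd_unit
      (Finset.dvd_prod_of_mem (fun i => (1 : K) ⊗ₜ[V] oringX V ϖ d r i)
        (Finset.mem_filter.mpr ⟨Finset.mem_univ i, hi⟩)) hu
  · have hXi : (MvPolynomial.X i : P) ∈ oringSubmonoid V d r :=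
      Submonoid.subset_closure ⟨i, hi, rfl⟩
    have h1 : IsUnit (algebraMap P LocP (MvPolynomial.X i)) :=
      IsLocalization.map_units (M := oringSubmonoid V d r) LocP ⟨_, hXi⟩
    exact ((h1.map (Ideal.Quotient.mk (oringRelation V ϖ d r))).map
      (Algebra.TensorProduct.includeRight :
        Oring V ϖ d r →ₐ[V] (FractionRing V) ⊗[V] (Oring V ϖ d r)).toRingHom)

/-- The backward map on the polynomial ring. -/
noncomputable def bwdPoly : Q →ₐ[K] (FractionRing V) ⊗[V] (Oring V ϖ d r) :=
  MvPolynomial.aeval fun j : Fin d => (1 : K) ⊗ₜ[V] oringX V ϖ d r j.succ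

theorem bwdPoly_units (hϖ0 : ϖ ≠ 0)
    (t : Submonoid.closure (Set.range (MvPolynomial.X : Fin d → Q))) :
    IsUnit (bwdPoly V ϖ d r t) := by
  obtain ⟨t, ht⟩ := t
  induction ht using Submonoid.closure_induction with
  | mem x hx =>
    obtain ⟨j, rfl⟩ := hx
    rw [bwdPoly, MvPolynomial.aeval_X]
    exact one_tmul_oringX_isUnit V ϖ d r hϖ0 j.succ
  | one => simp
  | mul x y hx hy ihx ihy => rw [map_mul]; exact ihx.mul ihy

/-- The backward map. -/
noncomputable def bwd (hϖ0 : ϖ ≠ 0) : L →+* (FractionRing V) ⊗[V] (Oring V ϖ d r) :=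
  IsLocalization.lift
    (M := Submonoid.closure (Set.range (MvPolynomial.X : Fin d → Q)))
    (g := (bwdPoly V ϖ d r).toRingHom) (bwdPoly_units V ϖ d r hϖ0)

theorem bwd_algebraMap (hϖ0 : ϖ ≠ 0) (q : Q) :
    bwd V ϖ d r hϖ0 (algebraMap Q L q) = bwdPoly V ϖ d r q :=
  IsLocalization.lift_eq _ _

theorem bwd_laurentX (hϖ0 : ϖ ≠ 0) (j : Fin d) :
    bwd V ϖ d r hϖ0 (laurentX K d j) = (1 : K) ⊗ₜ[V] oringX V ϖ d r j.succ := by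
  rw [laurentX, bwd_algebraMap, bwdPoly, MvPolynomial.aeval_X]

theorem bwd_commutes (hϖ0 : ϖ ≠ 0) (k : K) :
    bwd V ϖ d r hϖ0 (algebraMap K L k) = algebraMap K ((FractionRing V) ⊗[V] (Oring V ϖ d r)) k := by
  rw [IsScalarTower.algebraMap_apply K Q L, bwd_algebraMap]
  exact (bwdPoly V ϖ d r).commutes k

/-- The forward map as a `V`-algebra hom on `Oring`. -/
noncomputable def fwdA (hr : 1 ≤ r) : (Oring V ϖ d r) →ₐ[V] L :=
  { fwd V ϖ d r hr with
    commutes' := fun v => by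
      rw [RingHom.toMonoidHom_eq_coe, OneHom.toFun_eq_coe, MonoidHom.toOneHom_coe,
        MonoidHom.coe_coe, fwd_algebraMap V ϖ d r hr v, ← IsScalarTower.algebraMap_apply] }

/-- The forward map on the tensor product, as a `V`-algebra hom. -/
noncomputable def fwdT (hr : 1 ≤ r) : (FractionRing V) ⊗[V] (Oring V ϖ d r) →ₐ[V] L :=
  Algebra.TensorProduct.productMap (IsScalarTower.toAlgHom V K L) (fwdA V ϖ d r hr)

theorem fwdT_tmul (hr : 1 ≤ r) (a : Oring V ϖ d r) :
    fwdT V ϖ d r hr ((1 : K) ⊗ₜ[V] a) = fwd V ϖ d r hr a := by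
  rw [fwdT, Algebra.TensorProduct.productMap_apply_tmul, map_one, one_mul]; rfl

/-- The forward map on the tensor product, as a `K`-algebra hom. -/
noncomputable def fwdK (hr : 1 ≤ r) : (FractionRing V) ⊗[V] (Oring V ϖ d r) →ₐ[K] L :=
  { (fwdT V ϖ d r hr).toRingHom with
    commutes' := fun k => by
      have h1 : algebraMap K ((FractionRing V) ⊗[V] (Oring V ϖ d r)) k = k ⊗ₜ[V] 1 := by
        rw [Algebra.TensorProduct.algebraMap_apply]; norm_num
      rw [RingHom.toMonoidHom_eq_coe, OneHom.toFun_eq_coe, MonoidHom.toOneHom_coe,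
        MonoidHom.coe_coe, h1]
      show fwdT V ϖ d r hr (k ⊗ₜ[V] 1) = _
      rw [fwdT, Algebra.TensorProduct.productMap_apply_tmul, map_one, mul_one]
      rfl }

theorem fwdK_tmul (hr : 1 ≤ r) (a : Oring V ϖ d r) :
    fwdK V ϖ d r hr ((1 : K) ⊗ₜ[V] a) = fwd V ϖ d r hr a :=
  fwdT_tmul V ϖ d r hr a

/-- The backward map as a `K`-algebra hom. -/
noncomputable def bwdK (hϖ0 : ϖ ≠ 0) : L →ₐ[K] (FractionRing V) ⊗[V] (Oring V ϖ d r) :=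
  { bwd V ϖ d r hϖ0 with
    commutes' := fun k => by
      rw [RingHom.toMonoidHom_eq_coe, OneHom.toFun_eq_coe, MonoidHom.toOneHom_coe,
        MonoidHom.coe_coe]
      exact bwd_commutes V ϖ d r hϖ0 k }

theorem tensor_balance (v : V) :
    algebraMap K ((FractionRing V) ⊗[V] (Oring V ϖ d r)) (algebraMap V K v) =
      (1 : K) ⊗ₜ[V] algebraMap V (Oring V ϖ d r) v := by
  rw [Algebra.TensorProduct.algebraMap_apply]
  rw [show (algebraMap V K v : K) = v • (1 : K) from Algebra.algebraMap_eq_smul_one v]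
  rw [show (algebraMap V (Oring V ϖ d r) v) = v • (1 : Oring V ϖ d r) from
    Algebra.algebraMap_eq_smul_one v]
  exact TensorProduct.smul_tmul v 1 1

theorem fwd_bwd (hr : 1 ≤ r) (hϖ0 : ϖ ≠ 0) :
    (fwdK V ϖ d r hr).toRingHom.comp (bwd V ϖ d r hϖ0) = RingHom.id L := by
  apply IsLocalization.ringHom_ext
    (M := Submonoid.closure (Set.range (MvPolynomial.X : Fin d → Q)))
  apply MvPolynomial.ringHom_ext
  · intro a
    simp only [RingHom.comp_apply, RingHom.id_apply]
    rw [show (MvPolynomial.C a : Q) = algebraMap K Q a from rfl,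
      ← IsScalarTower.algebraMap_apply K Q L, bwd_commutes]
    exact (fwdK V ϖ d r hr).commutes a
  · intro j
    simp only [RingHom.comp_apply, RingHom.id_apply]
    rw [show algebraMap Q L (MvPolynomial.X j) = laurentX K d j from rfl, bwd_laurentX]
    show fwdK V ϖ d r hr ((1 : K) ⊗ₜ[V] oringX V ϖ d r j.succ) = laurentX K d j
    rw [fwdK_tmul, fwd_oringX, fwdVar_succ]

theorem bwd_fwd_right (hr : 1 ≤ r) (hϖ0 : ϖ ≠ 0) :
    (bwd V ϖ d r hϖ0).comp ((fwdK V ϖ d r hr).toRingHom.comp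
      (Algebra.TensorProduct.includeRight :
        Oring V ϖ d r →ₐ[V] (FractionRing V) ⊗[V] (Oring V ϖ d r)).toRingHom) =
    (Algebra.TensorProduct.includeRight :
        Oring V ϖ d r →ₐ[V] (FractionRing V) ⊗[V] (Oring V ϖ d r)).toRingHom := by
  apply Ideal.Quotient.ringHom_ext
  apply IsLocalization.ringHom_ext (M := oringSubmonoid V d r)
  apply MvPolynomial.ringHom_ext
  · intro v
    show bwd V ϖ d r hϖ0 (fwdK V ϖ d r hr ((1 : K) ⊗ₜ[V]
        (Ideal.Quotient.mk (oringRelation V ϖ d r) (algebraMap P LocP (MvPolynomial.C v))))) =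
      (1 : K) ⊗ₜ[V] (Ideal.Quotient.mk (oringRelation V ϖ d r)
        (algebraMap P LocP (MvPolynomial.C v)))
    rw [oringX_mk_C, fwdK_tmul, fwd_algebraMap, bwd_commutes, tensor_balance]
    rfl
  · intro i
    show bwd V ϖ d r hϖ0 (fwdK V ϖ d r hr ((1 : K) ⊗ₜ[V] oringX V ϖ d r i)) =
      (1 : K) ⊗ₜ[V] oringX V ϖ d r i
    rw [fwdK_tmul, fwd_oringX]
    induction i using Fin.cases with
    | succ j => rw [fwdVar_succ, bwd_laurentX]
    | zero =>
      have e1 := congrArg (bwd V ϖ d r hϖ0) (fwdVar_mul_prod V ϖ d r hr)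
      rw [map_mul, map_prod, bwd_commutes] at e1
      simp only [bwd_laurentX] at e1
      have e2 : ((1 : K) ⊗ₜ[V] oringX V ϖ d r 0) *
          ∏ j ∈ Finset.univ.filter (fun j : Fin d => (j : ℕ) + 2 ≤ r),
            (1 : K) ⊗ₜ[V] oringX V ϖ d r j.succ =
          algebraMap K ((FractionRing V) ⊗[V] (Oring V ϖ d r)) (algebraMap V K ϖ) := by
        rw [← prodFilterSucc hr (fun i => (1 : K) ⊗ₜ[V] oringX V ϖ d r i)]
        have hmap := map_prod
          (Algebra.TensorProduct.includeRight :
            Oring V ϖ d r →ₐ[V] (FractionRing V) ⊗[V] (Oring V ϖ d r))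
          (fun i => oringX V ϖ d r i)
          (Finset.univ.filter (fun i : Fin (d + 1) => (i : ℕ) < r))
        simp only [Algebra.TensorProduct.includeRight_apply] at hmap
        rw [← hmap, oringX_prod]
        exact (tensor_balance V ϖ d r ϖ).symm
      have hXu : IsUnit (∏ j ∈ Finset.univ.filter (fun j : Fin d => (j : ℕ) + 2 ≤ r),
          (1 : K) ⊗ₜ[V] oringX V ϖ d r j.succ) :=
        Finset.prod_induction _ IsUnit (fun _ _ => IsUnit.mul) isUnit_one
          fun j _ => one_tmul_oringX_isUnit V ϖ d r hϖ0 j.succ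
      exact hXu.mul_right_cancel (e1.trans e2.symm)

end StatementAux

/-- Let `V` be a discrete valuation ring with fraction field `K` and
uniformizer `ϖ`, and let `1 ≤ r ≤ d + 1`.  Then there is a `K`-algebra isomorphism from
`O(V, ϖ) ⊗_V K` onto the Laurent polynomial ring `K[X₂^{±1}, …, X_{d+1}^{±1}]`
determined by `T₁ ↦ ϖ · (X₂ ⋯ X_r)⁻¹` (expressed below, multiplicatively, as
`e(T₁) · (X₂ ⋯ X_r) = ϖ`, the `X_j` being units) and `T_i ↦ X_i` for `2 ≤ i ≤ d + 1`. -/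
theorem statement15 (V : Type*) [CommRing V] [IsDomain V] [IsDiscreteValuationRing V]
    (ϖ : V) (hϖ : Irreducible ϖ) (d r : ℕ) (hr : 1 ≤ r) (hrd : r ≤ d + 1) :
    ∃ e : (FractionRing V ⊗[V] Oring V ϖ d r) ≃ₐ[FractionRing V]
        LaurentRing (FractionRing V) d,
      (e (1 ⊗ₜ oringX V ϖ d r ⟨0, Nat.succ_pos d⟩) *
          ∏ j ∈ Finset.univ.filter fun j : Fin d => (j : ℕ) + 2 ≤ r,
            laurentX (FractionRing V) d j =
        algebraMap (FractionRing V) (LaurentRing (FractionRing V) d)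
          (algebraMap V (FractionRing V) ϖ)) ∧
      ∀ (i : Fin (d + 1)) (j : Fin d), (i : ℕ) = (j : ℕ) + 1 →
        e (1 ⊗ₜ oringX V ϖ d r i) = laurentX (FractionRing V) d j := by
  have hϖ0 : ϖ ≠ 0 := hϖ.ne_zero
  refine ⟨AlgEquiv.ofAlgHom (fwdK V ϖ d r hr) (bwdK V ϖ d r hϖ0)
    (AlgHom.ext fun x => RingHom.congr_fun (fwd_bwd V ϖ d r hr hϖ0) x) ?_, ?_, ?_⟩
  · apply Algebra.TensorProduct.ext
    · refine AlgHom.ext fun k => ?_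
      simp only [AlgHom.comp_apply, Algebra.TensorProduct.includeLeft_apply, AlgHom.id_apply]
      have hk : (k ⊗ₜ[V] (1 : Oring V ϖ d r)) =
          algebraMap (FractionRing V) (FractionRing V ⊗[V] Oring V ϖ d r) k := by
        rw [Algebra.TensorProduct.algebraMap_apply]; norm_num
      rw [hk, AlgHom.commutes, AlgHom.commutes]
    · exact AlgHom.ext fun a => RingHom.congr_fun (bwd_fwd_right V ϖ d r hr hϖ0) a
  · show fwdK V ϖ d r hr ((1 : FractionRing V) ⊗ₜ[V] oringX V ϖ d r ⟨0, Nat.succ_pos d⟩) *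
        _ = _
    have h0 : (⟨0, Nat.succ_pos d⟩ : Fin (d + 1)) = 0 := rfl
    rw [h0, fwdK_tmul, fwd_oringX]
    exact fwdVar_mul_prod V ϖ d r hr
  · intro i j hij
    have hsucc : i = j.succ := Fin.ext (by simpa using hij)
    subst hsucc
    show fwdK V ϖ d r hr ((1 : FractionRing V) ⊗ₜ[V] oringX V ϖ d r j.succ) =
      laurentX (FractionRing V) d j
    rw [fwdK_tmul, fwd_oringX, fwdVar_succ]
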